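/- Consider a factor graph that is a tree with two binary variables X₁, X₂, a pairwise factor f(x₁,x₂) > 0 and unary factors g₁(x₁) > 0, g₂(x₂) > 0. Let messages be defined by one round of BP to convergence and beliefs b_a, b₁, b₂ computed accordingly. Then the Bethe free energy computed from these beliefs equals -ln Z where Z = ∑_{x₁,x₂} g₁(x₁) g₂(x₂) f(x₁,x₂). -/
import Mathlib


theorem bethe_exact_two_variable_tree
    (f : Bool → Bool → ℝ) (g1 g2 : Bool → ℝ)
    (hf : ∀ x₁ x₂, 0 < f x₁ x₂) (hg1 : ∀ x₁, 0 < g1 x₁) (hg2 : ∀ x₂, 0 < g2 x₂)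
    (Z : ℝ) (hZ : Z = ∑ x₁, ∑ x₂, g1 x₁ * g2 x₂ * f x₁ x₂)
    (p : Bool → Bool → ℝ) (hp : ∀ x₁ x₂, p x₁ x₂ = g1 x₁ * g2 x₂ * f x₁ x₂ / Z)
    (b1 : Bool → ℝ) (hb1 : ∀ x₁, b1 x₁ = ∑ x₂, p x₁ x₂)
    (b2 : Bool → ℝ) (hb2 : ∀ x₂, b2 x₂ = ∑ x₁, p x₁ x₂) :
    -- Bethe free energy F = U - H computed from the beliefs
    -- U = -∑_a ∑_{x_a} b_a ln f_a  (factors: f, g1, g2)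
    ((-∑ x₁, ∑ x₂, p x₁ x₂ * Real.log (f x₁ x₂))
        - (∑ x₁, b1 x₁ * Real.log (g1 x₁))
        - (∑ x₂, b2 x₂ * Real.log (g2 x₂)))
    -- minus H = -∑_a ∑_{x_a} b_a ln b_a + ∑_i (d_i - 1) ∑_{x_i} b_i ln b_i,
    -- with d₁ = d₂ = 2
      - ((-∑ x₁, ∑ x₂, p x₁ x₂ * Real.log (p x₁ x₂))
          - (∑ x₁, b1 x₁ * Real.log (b1 x₁))
          - (∑ x₂, b2 x₂ * Real.log (b2 x₂))
          + ((2 : ℝ) - 1) * ∑ x₁, b1 x₁ * Real.log (b1 x₁)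
          + ((2 : ℝ) - 1) * ∑ x₂, b2 x₂ * Real.log (b2 x₂))
      = -Real.log Z := by
  have hZpos : 0 < Z := by
    rw [hZ]; simp only [Fintype.sum_bool]
    have := hf true true; have := hf true false; have := hf false true; have := hf false false
    have := hg1 true; have := hg1 false; have := hg2 true; have := hg2 false
    positivity
  have key : ∀ a b, Real.log (p a b)
      = Real.log (g1 a) + Real.log (g2 b) + Real.log (f a b) - Real.log Z := by
    intro a b
    have h1 := hg1 a; have h2 := hg2 b; have h3 := hf a b
    rw [hp, Real.log_div (by positivity) hZpos.ne',
      Real.log_mul (by positivity) h3.ne',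
      Real.log_mul h1.ne' h2.ne']
  simp only [key]
  simp only [hp, hb1, hb2, Fintype.sum_bool]
  field_simp
  rw [hZ]; simp only [Fintype.sum_bool]; ring
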